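/- For every n ≥ 2, the number of maximal transitive partitions of the transitive tournament on n vertices, i.e., partitions of the edge set {(i,j) : 1 ≤ i < j ≤ n} into exactly n − 1 nonempty blocks such that for all 1 ≤ i < j < k ≤ n the edge (i,k) lies in the same block as (i,j) or in the same block as (j,k), equals the Catalan number C_{n−1} = (1/n)·binomial(2n−2, n−1). -/

import Mathlib

/-- The edge set of the transitive tournament on `n` vertices:
ordered pairs `(i, j)` with `i < j`. -/
abbrev TournEdge (n : ℕ) := {p : Fin n × Fin n // p.1 < p.2}

/-- The edge `(a, b)` of the transitive tournament, for `a < b`. -/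
def te {n : ℕ} (a b : Fin n) (h : a < b) : TournEdge n := ⟨(a, b), h⟩

/-- A partition of the edge set of the transitive tournament (encoded as a setoid,
whose classes are the nonempty blocks) is transitive if for all `i < j < k` the
edge `(i,k)` lies in the same block as `(i,j)` or in the same block as `(j,k)`. -/
def IsTransitivePartition {n : ℕ} (S : Setoid (TournEdge n)) : Prop :=
  ∀ (i j k : Fin n) (hij : i < j) (hjk : j < k),
    S.r (te i k (hij.trans hjk)) (te i j hij) ∨
      S.r (te i k (hij.trans hjk)) (te j k hjk)

/-- Edge labeling induced by a binary tree on vertices `0..t.numNodes`. -/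
def lab : BinaryTree Unit → ℕ → ℕ → ℕ
  | BinaryTree.nil, _, _ => 0
  | BinaryTree.node _ l r, i, k =>
    if k ≤ l.numNodes then lab l i k
    else if l.numNodes + 1 ≤ i then
      l.numNodes + 1 + lab r (i - (l.numNodes + 1)) (k - (l.numNodes + 1))
    else l.numNodes

/-- A "good" label function on vertices `0..N`. -/
def Good (N : ℕ) (f : ℕ → ℕ → ℕ) : Prop :=
  (∀ i k, i < k → k ≤ N → i ≤ f i k ∧ f i k < k) ∧
  (∀ i j k, i < j → j < k → k ≤ N → f i k = f i j ∨ f i k = f j k)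
lemma lab_bounds : ∀ (t : BinaryTree Unit) (i k : ℕ), i < k → k ≤ t.numNodes →
    i ≤ lab t i k ∧ lab t i k < k := by
  intro t
  induction t with
  | nil => intro i k h1 h2; simp [BinaryTree.numNodes] at h2; omega
  | node a l r ihl ihr =>
    intro i k h1 h2
    simp only [BinaryTree.numNodes] at h2
    rw [lab]
    split_ifs with hk hi
    · exact ihl i k h1 hk
    · have := ihr (i - (l.numNodes + 1)) (k - (l.numNodes + 1)) (by omega) (by omega)
      omega
    · omega
lemma lab_cond : ∀ (t : BinaryTree Unit) (i j k : ℕ), i < j → j < k → k ≤ t.numNodes →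
    lab t i k = lab t i j ∨ lab t i k = lab t j k := by
  intro t
  induction t with
  | nil => intro i j k h1 h2 h3; simp [BinaryTree.numNodes] at h3; omega
  | node a l r ihl ihr =>
    intro i j k h1 h2 h3
    simp only [BinaryTree.numNodes] at h3
    by_cases hk : k ≤ l.numNodes
    · -- all in left
      rw [lab, if_pos hk, lab, if_pos (by omega : j ≤ l.numNodes),
        lab, if_pos hk]
      exact ihl i j k h1 h2 hk
    · by_cases hi : l.numNodes + 1 ≤ i
      · -- all in right
        rw [lab, if_neg hk, if_pos hi, lab,
          if_neg (by omega : ¬ j ≤ l.numNodes), if_pos hi,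
          lab, if_neg hk, if_pos (by omega : l.numNodes + 1 ≤ j)]
        rcases ihr (i - (l.numNodes + 1)) (j - (l.numNodes + 1)) (k - (l.numNodes + 1))
            (by omega) (by omega) (by omega) with h | h
        · left; omega
        · right; omega
      · -- i ≤ l.numNodes < k
        rw [lab, if_neg hk, if_neg hi]
        by_cases hj : j ≤ l.numNodes
        · right
          rw [lab, if_neg hk, if_neg (by omega)]
        · left
          rw [lab, if_neg hj, if_neg hi]
lemma lab_root (l r : BinaryTree Unit) (a : Unit) (k : ℕ) (hk : l.numNodes < k) :
    lab (BinaryTree.node a l r) 0 k = l.numNodes := by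
  rw [lab, if_neg (by omega), if_neg (by omega)]
lemma lab_inj : ∀ t s : BinaryTree Unit, t.numNodes = s.numNodes →
    (∀ i k, i < k → k ≤ t.numNodes → lab t i k = lab s i k) → t = s := by
  intro t
  induction t with
  | nil =>
    intro s hn _
    cases s with
    | nil => rfl
    | node b sl sr => simp [BinaryTree.numNodes] at hn
  | node a l r ihl ihr =>
    intro s hn h
    cases s with
    | nil => simp [BinaryTree.numNodes] at hn
    | node b sl sr =>
      simp only [BinaryTree.numNodes] at hn
      have hN : (BinaryTree.node a l r).numNodes = l.numNodes + r.numNodes + 1 := rfl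
      have hroot : l.numNodes = sl.numNodes := by
        have := h 0 (l.numNodes + r.numNodes + 1) (by omega) (by omega)
        rwa [lab_root _ _ _ _ (by omega), lab_root _ _ _ _ (by omega)] at this
      have hl : l = sl := by
        apply ihl _ hroot
        intro i k h1 h2
        have := h i k h1 (by simp [BinaryTree.numNodes]; omega)
        rwa [lab, if_pos h2, lab, if_pos (hroot ▸ h2)] at this
      have hr : r = sr := by
        apply ihr _ (by omega)
        intro i k h1 h2
        have := h (l.numNodes + 1 + i) (l.numNodes + 1 + k) (by omega)
          (by simp [BinaryTree.numNodes]; omega)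
        rw [lab, if_neg (by omega), if_pos (by omega),
          lab, if_neg (by omega), if_pos (by omega)] at this
        simp only [Nat.add_sub_cancel_left, ← hroot] at this
        omega
      cases a; cases b
      rw [hl, hr]
lemma exists_tree : ∀ N : ℕ, ∀ f : ℕ → ℕ → ℕ, Good N f →
    ∃ t : BinaryTree Unit, t.numNodes = N ∧ ∀ i k, i < k → k ≤ N → lab t i k = f i k := by
  intro N
  induction N using Nat.strong_induction_on with
  | _ N ih =>
    intro f hf
    match N with
    | 0 =>
      exact ⟨BinaryTree.nil, rfl, fun i k h1 h2 => absurd h2 (by omega)⟩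
    | N + 1 =>
      set m := f 0 (N + 1) with hm
      have hmb : 0 ≤ m ∧ m < N + 1 := hf.1 0 (N + 1) (by omega) le_rfl
      -- crossing lemma, step 1
      have step1 : ∀ i, i ≤ m → f i (N + 1) = m := by
        intro i hi
        rcases Nat.eq_zero_or_pos i with rfl | hpos
        · rfl
        · rcases hf.2 0 i (N + 1) (by omega) (by omega) le_rfl with h | h
          · have := hf.1 0 i (by omega) (by omega)
            omega
          · omega
      have hcross : ∀ i j, i ≤ m → m < j → j ≤ N + 1 → f i j = m := by
        intro i j hi hj hjN
        rcases Nat.eq_or_lt_of_le hjN with rfl | hjN'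
        · exact step1 i hi
        · rcases hf.2 i j (N + 1) (by omega) (by omega) le_rfl with h | h
          · rw [← h, step1 i hi]
          · have := hf.1 j (N + 1) (by omega) le_rfl
            have := step1 i hi
            omega
      -- left subtree
      obtain ⟨l, hl1, hl2⟩ := ih m (by omega) f
        ⟨fun i k h1 h2 => hf.1 i k h1 (by omega),
         fun i j k h1 h2 h3 => hf.2 i j k h1 h2 (by omega)⟩
      -- right subtree
      obtain ⟨r, hr1, hr2⟩ := ih (N - m) (by omega)
        (fun i k => f (m + 1 + i) (m + 1 + k) - (m + 1))
        ⟨fun i k h1 h2 => by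
            beta_reduce
            have := hf.1 (m + 1 + i) (m + 1 + k) (by omega) (by omega)
            omega,
         fun i j k h1 h2 h3 => by
            beta_reduce
            have hb1 := hf.1 (m + 1 + i) (m + 1 + k) (by omega) (by omega)
            rcases hf.2 (m + 1 + i) (m + 1 + j) (m + 1 + k) (by omega) (by omega)
              (by omega) with h | h
            · left; omega
            · right; omega⟩
      refine ⟨BinaryTree.node () l r, by simp [BinaryTree.numNodes]; omega, ?_⟩
      intro i k h1 h2
      rw [lab]
      split_ifs with hk hi
      · exact hl2 i k h1 (hl1 ▸ hk)
      · rw [hl1] at hk hi ⊢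
        rw [hr2 (i - (m + 1)) (k - (m + 1)) (by omega) (by omega)]
        have hb := hf.1 i k h1 h2
        have e1 : m + 1 + (i - (m + 1)) = i := by omega
        have e2 : m + 1 + (k - (m + 1)) = k := by omega
        rw [e1, e2]
        omega
      · rw [hl1] at hk hi ⊢
        exact (hcross i k (by omega) (by omega) h2).symm
def adjE {N : ℕ} (m : Fin N) : TournEdge (N + 1) :=
  te ⟨m.val, Nat.lt_succ_of_lt m.isLt⟩ ⟨m.val + 1, Nat.succ_lt_succ m.isLt⟩
    (Fin.mk_lt_mk.mpr (Nat.lt_succ_self _))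
def toS {n : ℕ} (t : BinaryTree Unit) : Setoid (TournEdge n) :=
  Setoid.ker (fun e => lab t e.1.1.val e.1.2.val)
lemma te_eq {n : ℕ} {a b a' b' : Fin n} (h : a < b) (h' : a' < b')
    (ha : a = a') (hb : b = b') : te a b h = te a' b' h' := by
  subst ha; subst hb; rfl
lemma exists_adj {N : ℕ} {S : Setoid (TournEdge (N + 1))} (hTP : IsTransitivePartition S) :
    ∀ e : TournEdge (N + 1),
      ∃ m : Fin N, e.1.1.val ≤ m.val ∧ m.val < e.1.2.val ∧ S.r e (adjE m) := by
  suffices h : ∀ d (e : TournEdge (N + 1)), e.1.2.val - e.1.1.val ≤ d →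
      ∃ m : Fin N, e.1.1.val ≤ m.val ∧ m.val < e.1.2.val ∧ S.r e (adjE m) from
    fun e => h _ e le_rfl
  intro d
  induction d with
  | zero =>
    rintro ⟨⟨i, k⟩, hik⟩ he
    have : i.val < k.val := hik
    simp only at he
    omega
  | succ d ihd =>
    rintro ⟨⟨i, k⟩, hik⟩ he
    have hik' : i.val < k.val := hik
    have hkN : k.val ≤ N := Fin.is_le k
    simp only at he ⊢
    by_cases hk : k.val = i.val + 1
    · refine ⟨⟨i.val, by omega⟩, le_rfl, hik', ?_⟩
      have heq : adjE (⟨i.val, by omega⟩ : Fin N) = te i k hik := by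
        exact te_eq _ _ (Fin.ext rfl) (Fin.ext (by simp; omega))
      rw [heq]
      exact S.refl' _
    · have hjlt : i.val + 1 < N + 1 := by omega
      set j : Fin (N + 1) := ⟨i.val + 1, hjlt⟩ with hj
      have hij : i < j := by rw [hj]; exact Fin.lt_def.mpr (by simp)
      have hjk : j < k := by rw [hj]; exact Fin.lt_def.mpr (by simp; omega)
      rcases hTP i j k hij hjk with h | h
      · obtain ⟨m, hm1, hm2, hm3⟩ := ihd (te i j hij) (by simp [te]; omega)
        refine ⟨m, hm1, by simp [te] at hm2 ⊢; omega, ?_⟩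
        exact S.trans' h hm3
      · obtain ⟨m, hm1, hm2, hm3⟩ := ihd (te j k hjk) (by simp [te]; omega)
        refine ⟨m, by simp [te] at hm1 ⊢; omega, by simp [te] at hm2 ⊢; omega, ?_⟩
        exact S.trans' h hm3
lemma toS_trans {N : ℕ} (t : BinaryTree Unit) (ht : t.numNodes = N) :
    IsTransitivePartition (toS (n := N + 1) t) := by
  intro i j k hij hjk
  exact lab_cond t i.val j.val k.val hij hjk (by rw [ht]; exact Fin.is_le k)

lemma toS_card {N : ℕ} (t : BinaryTree Unit) (ht : t.numNodes = N) :
    Nat.card (Quotient (toS (n := N + 1) t)) = N := by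
  have e1 : Nat.card (Quotient (toS (n := N + 1) t)) =
      Nat.card (Set.range (fun e : TournEdge (N + 1) => lab t e.1.1.val e.1.2.val)) :=
    Nat.card_congr (Setoid.quotientKerEquivRange _)
  rw [e1]
  apply Nat.card_eq_of_equiv_fin
  refine
    { toFun := fun x => ⟨x.1, ?_⟩
      invFun := fun m => ⟨m.val, ⟨adjE m, ?_⟩⟩
      left_inv := fun x => Subtype.ext rfl
      right_inv := fun m => Fin.ext rfl }
  · obtain ⟨e, he⟩ := x.2
    have he' : lab t e.1.1.val e.1.2.val = x.1 := he
    have h1 : e.1.1.val < e.1.2.val := e.2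
    have h2 : e.1.2.val ≤ N := Fin.is_le e.1.2
    have := lab_bounds t e.1.1.val e.1.2.val h1 (by omega)
    omega
  · show lab t m.val (m.val + 1) = m.val
    have := lab_bounds t m.val (m.val + 1) (Nat.lt_succ_self _) (by have := m.isLt; omega)
    omega

lemma toS_inj {N : ℕ} (t s : BinaryTree Unit) (ht : t.numNodes = N) (hs : s.numNodes = N)
    (h : toS (n := N + 1) t = toS (n := N + 1) s) : t = s := by
  apply lab_inj t s (ht.trans hs.symm)
  intro i k h1 h2
  rw [ht] at h2
  have hkn : k < N + 1 := by omega
  have hb' := lab_bounds s i k h1 (by rw [hs]; omega)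
  set m' := lab s i k with hm'
  have hmN : m' < N := by omega
  have h1' : (toS (n := N + 1) s).r (te ⟨i, by omega⟩ ⟨k, hkn⟩ (Fin.mk_lt_mk.mpr h1))
      (adjE ⟨m', hmN⟩) := by
    show lab s i k = lab s m' (m' + 1)
    have := lab_bounds s m' (m' + 1) (Nat.lt_succ_self _) (by rw [hs]; omega)
    omega
  have h2' : (toS (n := N + 1) t).r (te ⟨i, by omega⟩ ⟨k, hkn⟩ (Fin.mk_lt_mk.mpr h1))
      (adjE ⟨m', hmN⟩) := by rw [h]; exact h1'
  have h3' : lab t i k = lab t m' (m' + 1) := h2'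
  have := lab_bounds t m' (m' + 1) (Nat.lt_succ_self _) (by rw [ht]; omega)
  omega

lemma toS_surj {N : ℕ} (S : Setoid (TournEdge (N + 1))) (hTP : IsTransitivePartition S)
    (hcard : Nat.card (Quotient S) = N) :
    ∃ t : BinaryTree Unit, t.numNodes = N ∧ toS (n := N + 1) t = S := by
  classical
  set q : Fin N → Quotient S := fun m => Quotient.mk S (adjE m) with hq
  have hqsurj : Function.Surjective q := by
    intro c
    obtain ⟨e, rfl⟩ := Quotient.exists_rep c
    obtain ⟨m, _, _, hm⟩ := exists_adj hTP e
    exact ⟨m, (Quot.sound hm).symm⟩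
  have hqinj : Function.Injective q := by
    have hc : Nat.card (Fin N) = Nat.card (Quotient S) := by
      rw [Nat.card_eq_fintype_card, Fintype.card_fin, hcard]
    exact ((Nat.bijective_iff_surjective_and_card q).mpr ⟨hqsurj, hc⟩).1
  have hMuniq : ∀ (e : TournEdge (N + 1)) (m m' : Fin N),
      S.r e (adjE m) → S.r e (adjE m') → m = m' := by
    intro e m m' h h'
    exact hqinj (Quot.sound (S.trans' (S.symm' h) h'))
  have hM : ∀ (i k : ℕ) (h1 : i < k) (h2 : k ≤ N), ∃ m : Fin N,
      i ≤ m.val ∧ m.val < k ∧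
        S.r (te ⟨i, by omega⟩ ⟨k, by omega⟩ (Fin.mk_lt_mk.mpr h1)) (adjE m) :=
    fun i k h1 h2 => exists_adj hTP (te ⟨i, by omega⟩ ⟨k, by omega⟩ (Fin.mk_lt_mk.mpr h1))
  set M : ∀ (i k : ℕ), i < k → k ≤ N → Fin N := fun i k h1 h2 => (hM i k h1 h2).choose
    with hMdef
  have hMspec : ∀ (i k : ℕ) (h1 : i < k) (h2 : k ≤ N),
      i ≤ (M i k h1 h2).val ∧ (M i k h1 h2).val < k ∧
        S.r (te ⟨i, by omega⟩ ⟨k, by omega⟩ (Fin.mk_lt_mk.mpr h1)) (adjE (M i k h1 h2)) :=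
    fun i k h1 h2 => (hM i k h1 h2).choose_spec
  set f : ℕ → ℕ → ℕ := fun i k => if h : i < k ∧ k ≤ N then (M i k h.1 h.2).val else 0
    with hfdef
  have hfM : ∀ (i k : ℕ) (h1 : i < k) (h2 : k ≤ N), f i k = (M i k h1 h2).val := by
    intro i k h1 h2
    simp only [hfdef]
    rw [dif_pos ⟨h1, h2⟩]
  have hgood : Good N f := by
    constructor
    · intro i k h1 h2
      rw [hfM i k h1 h2]
      exact ⟨(hMspec i k h1 h2).1, (hMspec i k h1 h2).2.1⟩
    · intro i j k h1 h2 h3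
      have h13 : i < k := h1.trans h2
      have hjN : j ≤ N := by omega
      rw [hfM i k h13 h3, hfM i j h1 hjN, hfM j k h2 h3]
      rcases hTP ⟨i, by omega⟩ ⟨j, by omega⟩ ⟨k, by omega⟩
          (Fin.mk_lt_mk.mpr h1) (Fin.mk_lt_mk.mpr h2) with h | h
      · left
        have e1 := (hMspec i k h13 h3).2.2
        have e2 := (hMspec i j h1 hjN).2.2
        exact congrArg Fin.val (hMuniq _ _ _ e1 (S.trans' h e2))
      · right
        have e1 := (hMspec i k h13 h3).2.2
        have e2 := (hMspec j k h2 h3).2.2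
        exact congrArg Fin.val (hMuniq _ _ _ e1 (S.trans' h e2))
  obtain ⟨t, ht, hlab⟩ := exists_tree N f hgood
  refine ⟨t, ht, ?_⟩
  apply Setoid.ext
  rintro ⟨⟨i, k⟩, hik⟩ ⟨⟨i', k'⟩, hik'⟩
  have hik1 : i.val < k.val := hik
  have hik1' : i'.val < k'.val := hik'
  show lab t i.val k.val = lab t i'.val k'.val ↔ _
  rw [hlab _ _ hik1 (Fin.is_le k), hlab _ _ hik1' (Fin.is_le k'),
    hfM _ _ hik1 (Fin.is_le k), hfM _ _ hik1' (Fin.is_le k')]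
  have e1 := (hMspec i.val k.val hik1 (Fin.is_le k)).2.2
  have e2 := (hMspec i'.val k'.val hik1' (Fin.is_le k')).2.2
  constructor
  · intro hv
    have hmm : M i.val k.val hik1 (Fin.is_le k) = M i'.val k'.val hik1' (Fin.is_le k') :=
      Fin.ext hv
    exact S.trans' e1 (S.symm' (hmm.symm ▸ e2))
  · intro hr
    exact congrArg Fin.val (hMuniq _ _ _ e1 (S.trans' hr e2))

/-- The number of maximal transitive partitions (those with exactly `n - 1` blocks)
of the transitive tournament on `n ≥ 2` vertices is the Catalan number `C_{n-1}`. -/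
theorem card_maximal_transitive_partitions (n : ℕ) (hn : 2 ≤ n) :
    Nat.card {S : Setoid (TournEdge n) //
        IsTransitivePartition S ∧ Nat.card (Quotient S) = n - 1} =
      catalan (n - 1) := by
  obtain ⟨N, rfl⟩ : ∃ N, n = N + 1 := ⟨n - 1, by omega⟩
  simp only [Nat.add_sub_cancel]
  have hbij : Function.Bijective
      (fun tp : {t : BinaryTree Unit // t.numNodes = N} =>
        (⟨toS tp.1, toS_trans tp.1 tp.2, toS_card tp.1 tp.2⟩ :
          {S : Setoid (TournEdge (N + 1)) //
            IsTransitivePartition S ∧ Nat.card (Quotient S) = N})) := by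
    constructor
    · rintro ⟨t, ht⟩ ⟨s, hs⟩ h
      exact Subtype.ext (toS_inj t s ht hs (congrArg Subtype.val h))
    · rintro ⟨S, hTP, hcard⟩
      obtain ⟨t, ht, hts⟩ := toS_surj S hTP hcard
      exact ⟨⟨t, ht⟩, Subtype.ext hts⟩
  rw [← Nat.card_eq_of_bijective _ hbij]
  rw [Nat.card_congr (Equiv.subtypeEquivRight (fun t => (BinaryTree.mem_treesOfNumNodesEq).symm))]
  exact (Nat.card_eq_finsetCard _).trans (BinaryTree.treesOfNumNodesEq_card_eq_catalan N)
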